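/- For integers K, K_r, r, s, t with s + t = r + 1, 1 ≤ s ≤ K_r, 1 ≤ t ≤ K - K_r, the per-partition per-receiver communication load R_p = (η₁η₂B / (C(K-r-1, K_r - s)·C(r,t))) · C(K_r - 1, s-1) · C(K - K_r, t) / (NQB), with N = C(K,r)η₁ and Q = Kη₂, equals (1/K_r)·(1 - r/K)·(1/C(K,K_r)). -/

import Mathlib

theorem stmt3 (K Kr r s t η₁ η₂ B : ℕ)
    (hKr : Kr < K) (hrK : r ≤ K) (hst : s + t = r + 1)
    (hs1 : 1 ≤ s) (hsKr : s ≤ Kr) (ht1 : 1 ≤ t) (htKt : t ≤ K - Kr)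
    (hKrs : Kr - s ≤ K - r - 1)
    (hη₁ : 0 < η₁) (hη₂ : 0 < η₂) (hB : 0 < B) :
    ((η₁ * η₂ * B : ℝ) /
        ((Nat.choose (K - r - 1) (Kr - s) : ℝ) * (Nat.choose r t : ℝ)))
      * (Nat.choose (Kr - 1) (s - 1) : ℝ) * (Nat.choose (K - Kr) t : ℝ)
      / (((Nat.choose K r * η₁ : ℕ) : ℝ) * ((K * η₂ : ℕ) : ℝ) * (B : ℝ))
    = (1 / (Kr : ℝ)) * (1 - (r : ℝ) / K) * (1 / (Nat.choose K Kr : ℝ)) := by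
  have hrK' : r < K := by omega
  have htr : t ≤ r := by omega
  have hs' : s - 1 ≤ Kr - 1 := by omega
  have hKrK : Kr ≤ K := hKr.le
  have e1 : Kr - 1 - (s - 1) = Kr - s := by omega
  have e2 : K - r - 1 - (Kr - s) = K - Kr - t := by omega
  have e3 : r - t = s - 1 := by omega
  have hKr0 : (Kr:ℝ) ≠ 0 := Nat.cast_ne_zero.2 (by omega)
  have hKmr : ((K:ℝ) - r) ≠ 0 := by
    have : (r:ℝ) < K := by exact_mod_cast hrK'
    linarith
  have key1 : (Kr:ℝ) * ((Kr-1).factorial) = Kr.factorial := by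
    exact_mod_cast congrArg (Nat.cast : ℕ → ℝ) (Nat.mul_factorial_pred (by omega : Kr ≠ 0))
  have fKr : ((Kr - 1).factorial : ℝ) = (Kr.factorial : ℝ) / Kr :=
    (eq_div_iff hKr0).2 (by rw [← key1]; ring)
  have key2 : ((K:ℝ) - r) * ((K - r - 1).factorial) = (K - r).factorial := by
    have h := congrArg (Nat.cast : ℕ → ℝ) (Nat.mul_factorial_pred (by omega : K - r ≠ 0))
    push_cast [Nat.cast_sub hrK] at h
    rw [show K - r - 1 = K - (r+1) by omega]
    rw [show K - r - 1 = K - (r+1) by omega] at h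
    exact h
  have fKrr : ((K - r - 1).factorial : ℝ) = ((K - r).factorial : ℝ) / ((K : ℝ) - r) :=
    (eq_div_iff hKmr).2 (by rw [← key2]; ring)
  push_cast
  rw [Nat.cast_choose ℝ hs', Nat.cast_choose ℝ htKt, Nat.cast_choose ℝ hKrs,
      Nat.cast_choose ℝ htr, Nat.cast_choose ℝ hrK, Nat.cast_choose ℝ hKrK,
      e1, e2, e3, fKr, fKrr]
  have h1 : ((s-1).factorial : ℝ) ≠ 0 := Nat.cast_ne_zero.2 (Nat.factorial_ne_zero _)
  have h2 : ((Kr-s).factorial : ℝ) ≠ 0 := Nat.cast_ne_zero.2 (Nat.factorial_ne_zero _)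
  have h3 : ((t).factorial : ℝ) ≠ 0 := Nat.cast_ne_zero.2 (Nat.factorial_ne_zero _)
  have h4 : ((K-Kr-t).factorial : ℝ) ≠ 0 := Nat.cast_ne_zero.2 (Nat.factorial_ne_zero _)
  have h5 : ((r).factorial : ℝ) ≠ 0 := Nat.cast_ne_zero.2 (Nat.factorial_ne_zero _)
  have h6 : ((K-r).factorial : ℝ) ≠ 0 := Nat.cast_ne_zero.2 (Nat.factorial_ne_zero _)
  have h7 : ((Kr).factorial : ℝ) ≠ 0 := Nat.cast_ne_zero.2 (Nat.factorial_ne_zero _)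
  have h8 : ((K-Kr).factorial : ℝ) ≠ 0 := Nat.cast_ne_zero.2 (Nat.factorial_ne_zero _)
  have h9 : ((K).factorial : ℝ) ≠ 0 := Nat.cast_ne_zero.2 (Nat.factorial_ne_zero _)
  have hK0 : (K:ℝ) ≠ 0 := Nat.cast_ne_zero.2 (by omega)
  have hη₁' : (η₁:ℝ) ≠ 0 := Nat.cast_ne_zero.2 (by omega)
  have hη₂' : (η₂:ℝ) ≠ 0 := Nat.cast_ne_zero.2 (by omega)
  have hB' : (B:ℝ) ≠ 0 := Nat.cast_ne_zero.2 (by omega)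
  field_simp
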